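/- arXiv:2301.03435 — 2 statements merged into one kernel-verified Lean document; each statement's English description precedes it below -/
import Mathlib

section
/- The map T(W) = L₁ ∪ (L₂ · W) on languages is co-continuous: for every decreasing sequence of languages W₀ ⊇ W₁ ⊇ W₂ ⊇ …, T(⋂ᵢ Wᵢ) = ⋂ᵢ T(Wᵢ). -/
private lemma mem_iInf' {A : Type*} (W : ℕ → Language A) (x : List A) :
    x ∈ ⨅ i, W i ↔ ∀ i, x ∈ W i := by
  exact Set.mem_iInter

/-- The map `T(W) = L₁ ∪ (L₂ · W)` on languages is co-continuous: for every
decreasing sequence of languages `W₀ ⊇ W₁ ⊇ …`, `T(⋂ᵢ Wᵢ) = ⋂ᵢ T(Wᵢ)`. -/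
theorem T_cocontinuous {A : Type*} (L₁ L₂ : Language A) (W : ℕ → Language A)
    (hanti : ∀ i, W (i + 1) ≤ W i) :
    L₁ + L₂ * (⨅ i, W i) = ⨅ i, (L₁ + L₂ * W i) := by
  have hmono : ∀ {i j : ℕ}, i ≤ j → W j ≤ W i := fun {i j} h =>
    antitone_nat_of_succ_le hanti h
  ext x
  simp only [Language.mem_add, Language.mem_mul, mem_iInf']
  constructor
  · rintro (h | ⟨a, ha, b, hb, rfl⟩) i
    · exact Or.inl h
    · exact Or.inr ⟨a, ha, b, hb i, rfl⟩
  · intro h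
    by_cases hx : x ∈ L₁
    · exact Or.inl hx
    right
    have h' : ∀ i, ∃ k : Fin (x.length + 1),
        x.take (k : ℕ) ∈ L₂ ∧ x.drop (k : ℕ) ∈ W i := by
      intro i
      rcases (h i).resolve_left hx with ⟨a, ha, b, hb, hab⟩
      have hlen : a.length ≤ x.length := by
        rw [← hab, List.length_append]; omega
      refine ⟨⟨a.length, by omega⟩, ?_, ?_⟩
      · simpa [← hab, List.take_left] using ha
      · simpa [← hab, List.drop_left] using hb
    choose f hf1 hf2 using h'
    obtain ⟨k, hk⟩ := Finite.exists_infinite_fiber f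
    rw [Set.infinite_coe_iff] at hk
    obtain ⟨j₀, hj₀, _⟩ := hk.exists_gt 0
    refine ⟨x.take (k : ℕ), ?_, x.drop (k : ℕ), ?_, List.take_append_drop _ _⟩
    · have : f j₀ = k := hj₀
      simpa [this] using hf1 j₀
    · intro i
      obtain ⟨j, hj, hij⟩ := hk.exists_gt i
      have hfj : f j = k := hj
      exact hmono hij.le (hfj ▸ hf2 j)
end

section
/- For a language L with ε ∉ L, the iterates of T(W) = L₁ ∪ (L · W) starting from the full language A* satisfy, for all n ≥ 1, Tⁿ(A*) = (⋃_{k<n} Lᵏ · L₁) ∪ (Lⁿ · A*), and hence ⋂ₙ Tⁿ(A*) = L* · L₁. -/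
open Computability

lemma len_le_of_mem_pow {A : Type*} {L : Language A} (h : [] ∉ L) :
    ∀ n (x : List A), x ∈ L ^ n → n ≤ x.length := by
  have aux : ∀ S : List (List A), (∀ y ∈ S, y ∈ L) → S.length ≤ S.flatten.length := by
    intro S
    induction S with
    | nil => simp
    | cons a S ih =>
      intro hS
      have ha : a ∈ L := hS a List.mem_cons_self
      have h1 : 1 ≤ a.length := by
        cases a with
        | nil => exact absurd ha h
        | cons _ _ => simp
      have := ih (fun y hy => hS y (List.mem_cons_of_mem _ hy))
      simp only [List.length_cons, List.flatten_cons, List.length_append]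
      omega
  intro n x hx
  obtain ⟨S, rfl, rfl, hS⟩ := Language.mem_pow.1 hx
  exact aux S hS

/-- If `ε ∉ L`, the iterates of `T(W) = L₁ ∪ (L · W)` from the full language
`⊤ = A*` satisfy `Tⁿ(⊤) = (⋃_{k<n} Lᵏ·L₁) ∪ Lⁿ·⊤` for all `n ≥ 1`, and hence
`⋂ₙ Tⁿ(⊤) = L* · L₁`. -/
theorem iterate_top_eq_and_iInf {A : Type*} (L₁ L : Language A) (h : [] ∉ L) :
    (∀ n : ℕ, 1 ≤ n →
        (fun W => L₁ + L * W)^[n] ⊤ = (⨆ k < n, L ^ k * L₁) + L ^ n * ⊤) ∧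
      ⨅ n : ℕ, (fun W => L₁ + L * W)^[n] ⊤ = L∗ * L₁ := by
  have key : ∀ n : ℕ, 1 ≤ n →
      (fun W => L₁ + L * W)^[n] ⊤ = (⨆ k < n, L ^ k * L₁) + L ^ n * ⊤ := by
    intro n hn
    induction n with
    | zero => omega
    | succ n ih =>
      rcases Nat.eq_or_lt_of_le hn with h1 | h1
      · simp [← h1]
      · have hn1 : 1 ≤ n := by omega
        rw [Function.iterate_succ_apply', ih hn1]
        simp only [mul_add, Language.mul_iSup, ← mul_assoc, ← pow_succ']
        rw [← add_assoc]
        congr 1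
        apply le_antisymm
        · apply sup_le
          · exact le_trans (by simp) (le_iSup₂ (f := fun k (_ : k < n + 1) => L ^ k * L₁) 0 (by omega))
          · exact iSup₂_le fun i hi =>
              le_iSup₂ (f := fun k (_ : k < n + 1) => L ^ k * L₁) (i + 1) (by omega)
        · refine iSup₂_le fun k hk => ?_
          match k with
          | 0 => simpa using (le_sup_left : L₁ ≤ L₁ + _)
          | (i+1) =>
            exact le_trans (le_iSup₂ (f := fun j (_ : j < n) => L ^ (j+1) * L₁) i (by omega))
              le_sup_right
  refine ⟨key, le_antisymm ?_ ?_⟩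
  · intro x hx
    have hx' : x ∈ (fun W => L₁ + L * W)^[x.length + 1] ⊤ :=
      iInf_le (fun n => (fun W => L₁ + L * W)^[n] ⊤) (x.length + 1) hx
    rw [key _ (by omega)] at hx'
    rw [Language.mem_add] at hx'
    rcases hx' with hx' | hx'
    · simp only [Language.mem_iSup, Language.mem_mul] at hx'
      obtain ⟨k, _, a, ha, b, hb, rfl⟩ := hx'
      have hak : a ∈ L∗ := by
        rw [Language.kstar_eq_iSup_pow]
        exact Language.mem_iSup.2 ⟨k, ha⟩
      exact ⟨a, hak, b, hb, rfl⟩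
    · obtain ⟨a, ha, b, _, rfl⟩ := hx'
      have := len_le_of_mem_pow h _ a ha
      simp at this
  · refine le_iInf fun n => ?_
    cases n with
    | zero => simp
    | succ n =>
      rw [key _ (by omega)]
      rw [Language.kstar_eq_iSup_pow, Language.iSup_mul]
      apply iSup_le
      intro k
      rcases lt_or_ge k (n + 1) with hk | hk
      · exact le_trans (le_iSup₂ (f := fun j (_ : j < n+1) => L ^ j * L₁) k hk) le_sup_left
      · refine le_trans ?_ le_sup_right
        have : L ^ k * L₁ ≤ L ^ (n+1) * (L ^ (k - (n+1)) * L₁) := by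
          rw [← mul_assoc, ← pow_add, Nat.add_sub_cancel' hk]
        exact le_trans this (mul_le_mul_right le_top _)
end
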